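/- Differentiating the transfer function: dF/dλ(λ) = -∫₀ᴸ u(x,λ)² dx, i.e., the diagonal mass matrix entry M_{ii} = ⟨u_i,u_i⟩ obeys M_{ii} = -F'(λ_i). -/

import Mathlib

open intervalIntegral Set

lemma cont_deriv2 (f : ℝ → ℝ) (hf : ContDiff ℝ 2 f) : Continuous (deriv (deriv f)) :=
  ((contDiff_succ_iff_deriv.mp
    (show ContDiff ℝ (1+1) f by norm_num; exact hf)).2.2).continuous_deriv le_rfl

lemma sym_parts (L : ℝ) (f w : ℝ → ℝ) (hf : ContDiff ℝ 2 f) (hw : ContDiff ℝ 2 w)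
    (hf0 : deriv f 0 = 0) (hfL : deriv f L = 0)
    (hw0 : deriv w 0 = 0) (hwL : deriv w L = 0) :
    (∫ x in (0:ℝ)..L, f x * deriv (deriv w) x) =
      ∫ x in (0:ℝ)..L, w x * deriv (deriv f) x := by
  have hfd : Differentiable ℝ f := hf.differentiable (by norm_num)
  have hwd : Differentiable ℝ w := hw.differentiable (by norm_num)
  have hf1 : ContDiff ℝ 1 (deriv f) :=
    (contDiff_succ_iff_deriv.mp (show ContDiff ℝ (1+1) f by norm_num; exact hf)).2.2
  have hw1 : ContDiff ℝ 1 (deriv w) :=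
    (contDiff_succ_iff_deriv.mp (show ContDiff ℝ (1+1) w by norm_num; exact hw)).2.2
  have hfd' : Differentiable ℝ (deriv f) := hf1.differentiable (by norm_num)
  have hwd' : Differentiable ℝ (deriv w) := hw1.differentiable (by norm_num)
  have h1 : (∫ x in (0:ℝ)..L, f x * deriv (deriv w) x)
      = f L * deriv w L - f 0 * deriv w 0 - ∫ x in (0:ℝ)..L, deriv f x * deriv w x := by
    apply integral_mul_deriv_eq_deriv_mul
    · exact fun x _ => (hfd x).hasDerivAt
    · exact fun x _ => (hwd' x).hasDerivAt
    · exact (hf.continuous_deriv (by norm_num)).intervalIntegrable _ _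
    · exact ((hw1.continuous_deriv le_rfl).intervalIntegrable _ _)
  have h2 : (∫ x in (0:ℝ)..L, w x * deriv (deriv f) x)
      = w L * deriv f L - w 0 * deriv f 0 - ∫ x in (0:ℝ)..L, deriv w x * deriv f x := by
    apply integral_mul_deriv_eq_deriv_mul
    · exact fun x _ => (hwd x).hasDerivAt
    · exact fun x _ => (hfd' x).hasDerivAt
    · exact (hw.continuous_deriv (by norm_num)).intervalIntegrable _ _
    · exact ((hf1.continuous_deriv le_rfl).intervalIntegrable _ _)
  rw [h1, h2, hf0, hfL, hw0, hwL]
  simp [mul_comm]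


/-- Derivative of the transfer function: `F'(λ₀) = -∫₀ᴸ u(x,λ₀)² dx`, i.e. the diagonal
mass matrix entry `Mᵢᵢ = ⟨uᵢ,uᵢ⟩` equals `-F'(λᵢ)`.  Here `v = ∂u/∂λ` solves the
differentiated equation and differentiation under the integral sign is assumed. -/
theorem transfer_function_derivative
    (L : ℝ) (hL : 0 < L) (p g : ℝ → ℝ)
    (hp : ContinuousOn p (Icc 0 L)) (hp0 : ∀ x ∈ Icc 0 L, 0 ≤ p x)
    (hg : Continuous g)
    (lam0 : ℝ) (hlam0 : 0 < lam0)
    (u : ℝ → ℝ → ℝ) (v : ℝ → ℝ)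
    (hu : ∀ mu > (0:ℝ), ContDiff ℝ 2 (u mu)) (hv : ContDiff ℝ 2 v)
    (heq : ∀ mu > (0:ℝ), ∀ x ∈ Icc 0 L,
      -(deriv (deriv (u mu)) x) + p x * u mu x + mu * u mu x = g x)
    (hbc0 : ∀ mu > (0:ℝ), deriv (u mu) 0 = 0) (hbcL : ∀ mu > (0:ℝ), deriv (u mu) L = 0)
    -- `v = ∂u/∂λ` at `λ₀`:
    (hdu : ∀ x ∈ Icc 0 L, HasDerivAt (fun mu => u mu x) (v x) lam0)
    -- the differentiated equation `-v'' + p v + λ₀ v = -u(·,λ₀)` with Neumann conditions: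
    (heqv : ∀ x ∈ Icc 0 L,
      -(deriv (deriv v) x) + p x * v x + lam0 * v x = -(u lam0 x))
    (hbcv0 : deriv v 0 = 0) (hbcvL : deriv v L = 0)
    -- differentiation under the integral sign:
    (hswap : HasDerivAt (fun mu => ∫ x in (0:ℝ)..L, g x * u mu x)
      (∫ x in (0:ℝ)..L, g x * v x) lam0) :
    HasDerivAt (fun mu => ∫ x in (0:ℝ)..L, g x * u mu x)
      (-∫ x in (0:ℝ)..L, (u lam0 x) ^ 2) lam0 := by
  set f := u lam0 with hfdef
  have hf : ContDiff ℝ 2 f := hu lam0 hlam0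
  have hcf : Continuous f := hf.continuous
  have hcv : Continuous v := hv.continuous
  have hcf'' : Continuous (deriv (deriv f)) := cont_deriv2 f hf
  have hcv'' : Continuous (deriv (deriv v)) := cont_deriv2 v hv
  have key : (∫ x in (0:ℝ)..L, g x * v x) = -∫ x in (0:ℝ)..L, f x ^ 2 := by
    have hEq : EqOn (fun x => g x * v x)
        (fun x => (f x * deriv (deriv v) x - v x * deriv (deriv f) x) - f x ^ 2)
        (uIcc (0:ℝ) L) := by
      intro x hx
      rw [uIcc_of_le hL.le] at hx
      have e1 := heq lam0 hlam0 x hx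
      have e2 := heqv x hx
      simp only
      linear_combination (-(v x)) * e1 + f x * e2
    rw [integral_congr hEq,
      integral_sub (show IntervalIntegrable
            (fun x => f x * deriv (deriv v) x - v x * deriv (deriv f) x) MeasureTheory.volume 0 L
          from ((hcf.mul hcv'').sub (hcv.mul hcf'')).intervalIntegrable _ _)
        (show IntervalIntegrable (fun x => f x ^ 2) MeasureTheory.volume 0 L
          from (hcf.pow 2).intervalIntegrable _ _),
      integral_sub (show IntervalIntegrable (fun x => f x * deriv (deriv v) x)
            MeasureTheory.volume 0 L from (hcf.mul hcv'').intervalIntegrable _ _)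
        (show IntervalIntegrable (fun x => v x * deriv (deriv f) x)
            MeasureTheory.volume 0 L from (hcv.mul hcf'').intervalIntegrable _ _),
      sym_parts L f v hf hv (hbc0 lam0 hlam0) (hbcL lam0 hlam0) hbcv0 hbcvL]
    ring
  exact key ▸ hswap
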